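/- Let L be a positive integer. Let X be an exponential random variable with mean λ > 0 and V an independent gamma random variable with shape L and scale s > 0. Then for all θ > 0, P̄ > 0 and c > 0, P( min(θ·V, P̄)·X ≥ c ) = ( P̄^L/(Γ(L)·(θ·s)^L) ) · K_L( c/(P̄·λ), P̄/(θ·s) ) + exp(−c/(P̄·λ)) · Γ(L, P̄/(θ·s)) / Γ(L), where K_ν(x,y) = ∫₁^∞ t^(−ν−1)·exp(−x·t − y/t) dt is the incomplete Bessel function. -/

import Mathlib

open MeasureTheory ProbabilityTheory

/-- Upper incomplete gamma function `Γ(a, b) = ∫_b^∞ t^(a-1) e^(-t) dt`. -/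
noncomputable def upperIncGamma (a b : ℝ) : ℝ :=
  ∫ t in Set.Ioi b, t ^ (a - 1) * Real.exp (-t)

/-- Incomplete Bessel function `K_ν(x, y) = ∫₁^∞ t^(-ν-1) exp(-x t - y/t) dt`. -/
noncomputable def incompleteBessel (ν x y : ℝ) : ℝ :=
  ∫ t in Set.Ioi (1 : ℝ), t ^ (-ν - 1) * Real.exp (-(x * t) - y / t)

section Aux

open Set Real

lemma expMeasure_Ici {r a : ℝ} (hr : 0 < r) (ha : 0 ≤ a) :
    expMeasure r (Set.Ici a) = ENNReal.ofReal (Real.exp (-(r * a))) := by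
  have hint : IntegrableOn (fun x ↦ r * Real.exp (-(r * x))) (Set.Ici a) := by
    rw [integrableOn_Ici_iff_integrableOn_Ioi]
    simp_rw [neg_mul_eq_neg_mul]
    exact (exp_neg_integrableOn_Ioi a hr).const_mul r
  rw [expMeasure, gammaMeasure, withDensity_apply _ measurableSet_Ici]
  have hcong : ∀ x ∈ Set.Ici a, gammaPDF 1 r x = ENNReal.ofReal (r * Real.exp (-(r * x))) := by
    intro x hx
    exact exponentialPDF_of_nonneg (le_trans ha hx)
  rw [setLIntegral_congr_fun measurableSet_Ici hcong,
    ← ofReal_integral_eq_lintegral_ofReal hint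
      (ae_of_all _ fun x => by positivity)]
  congr 1
  have h1 : ∫ x in Ioi a, Real.exp (-(r * x)) = r⁻¹ * Real.exp (-(r * a)) := by
    have := integral_comp_mul_left_Ioi (fun y => Real.exp (-y)) a hr
    simp only [integral_exp_neg_Ioi, smul_eq_mul] at this
    exact this
  rw [integral_Ici_eq_integral_Ioi, MeasureTheory.integral_const_mul, h1]
  field_simp

lemma expMeasure_Iio_zero {r : ℝ} : expMeasure r (Set.Iio 0) = 0 := by
  rw [expMeasure, gammaMeasure, withDensity_apply _ measurableSet_Iio]
  exact lintegral_gammaPDF_of_nonpos le_rfl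

lemma gamma_tail {r b : ℝ} (hr : 0 < r) (hb : 0 < b) (L : ℕ) (hL : 0 < L) :
    ∫ v in Set.Ioi b, gammaPDFReal L r v
      = (∫ u in Set.Ioi (r * b), u ^ ((L : ℝ) - 1) * Real.exp (-u)) / Real.Gamma L := by
  have h1 : ∀ v ∈ Set.Ioi b, gammaPDFReal L r v
      = r ^ (L : ℝ) / Real.Gamma L * v ^ ((L : ℝ) - 1) * Real.exp (-(r * v)) := by
    intro v hv
    rw [gammaPDFReal, if_pos (le_of_lt (lt_of_lt_of_le hb (le_of_lt hv)))]
  rw [setIntegral_congr_fun measurableSet_Ioi h1]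
  have h2 : ∀ v ∈ Set.Ioi b,
      r ^ (L : ℝ) / Real.Gamma L * v ^ ((L : ℝ) - 1) * Real.exp (-(r * v))
      = (fun u => r ^ (L : ℝ) / Real.Gamma L * (u / r) ^ ((L : ℝ) - 1) * Real.exp (-u)) (r * v) := by
    intro v hv
    simp only
    rw [mul_div_cancel_left₀ _ hr.ne']
  rw [setIntegral_congr_fun measurableSet_Ioi h2,
    integral_comp_mul_left_Ioi
      (fun u => r ^ (L : ℝ) / Real.Gamma L * (u / r) ^ ((L : ℝ) - 1) * Real.exp (-u)) b hr,
    smul_eq_mul]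
  have h3 : ∀ u ∈ Set.Ioi (r * b),
      r ^ (L : ℝ) / Real.Gamma L * (u / r) ^ ((L : ℝ) - 1) * Real.exp (-u)
      = (r ^ (L : ℝ) / Real.Gamma L / r ^ ((L : ℝ) - 1)) * (u ^ ((L : ℝ) - 1) * Real.exp (-u)) := by
    intro u hu
    have hu0 : 0 ≤ u := le_of_lt (lt_trans (by positivity) hu)
    rw [div_rpow hu0 hr.le]
    ring
  rw [setIntegral_congr_fun measurableSet_Ioi h3, MeasureTheory.integral_const_mul]
  have hpow : r ^ (L : ℝ) / r ^ ((L : ℝ) - 1) = r := by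
    rw [← Real.rpow_sub hr]; simp
  rw [div_right_comm, hpow, ← mul_assoc,
    show r⁻¹ * (r / Real.Gamma L) = (Real.Gamma L)⁻¹ by field_simp, inv_mul_eq_div]

lemma integral_Ioo_inv_sub {v0 : ℝ} (hv0 : 0 < v0) (G : ℝ → ℝ) :
    ∫ w in Set.Ioo 0 v0, G w = ∫ t in Set.Ioi 1, v0 / t ^ 2 * G (v0 / t) := by
  have himg : (fun t => v0 / t) '' Set.Ioi 1 = Set.Ioo 0 v0 := by
    ext w
    constructor
    · rintro ⟨t, ht, rfl⟩
      have ht1 : (1 : ℝ) < t := ht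
      exact ⟨by positivity, by
        rw [div_lt_iff₀ (by linarith)]
        nlinarith⟩
    · rintro ⟨hw0, hwv⟩
      refine ⟨v0 / w, ?_, ?_⟩
      · rw [Set.mem_Ioi, lt_div_iff₀ hw0, one_mul]; exact hwv
      · show v0 / (v0 / w) = w
        field_simp
  have hderiv : ∀ t ∈ Set.Ioi 1,
      HasDerivWithinAt (fun t => v0 / t) (-(v0 / t ^ 2)) (Set.Ioi 1) t := by
    intro t ht
    have ht0 : t ≠ 0 := by have : (1:ℝ) < t := ht; linarith
    have := ((hasDerivAt_inv ht0).const_mul v0).hasDerivWithinAt (s := Set.Ioi 1)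
    simp only [mul_neg, ← div_eq_mul_inv] at this
    convert this using 1
  have hinj : Set.InjOn (fun t => v0 / t) (Set.Ioi 1) := by
    intro a ha b hb hab
    have ha0 : a ≠ 0 := by have : (1:ℝ) < a := ha; linarith
    have hb0 : b ≠ 0 := by have : (1:ℝ) < b := hb; linarith
    have h := hab
    simp only at h
    rw [div_eq_div_iff ha0 hb0] at h
    exact (mul_left_cancel₀ hv0.ne' (by linarith : v0 * b = v0 * a)).symm
  rw [← himg, integral_image_eq_integral_abs_deriv_smul measurableSet_Ioi hderiv hinj G]
  refine setIntegral_congr_fun measurableSet_Ioi fun t ht => ?_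
  have ht1 : (1:ℝ) < t := ht
  rw [abs_neg, abs_of_pos (by positivity), smul_eq_mul]

end Aux

theorem capped_power_exceedance_prob
    {Ω : Type*} [MeasureSpace Ω] [IsProbabilityMeasure (ℙ : Measure Ω)]
    (L : ℕ) (hL : 0 < L)
    (X V : Ω → ℝ) (hXm : Measurable X) (hVm : Measurable V)
    (lam s : ℝ) (hlam : 0 < lam) (hs : 0 < s)
    (hX : Measure.map X ℙ = expMeasure lam⁻¹)
    (hV : Measure.map V ℙ = gammaMeasure L s⁻¹)
    (hind : IndepFun X V ℙ)
    (θ Pbar c : ℝ) (hθ : 0 < θ) (hPbar : 0 < Pbar) (hc : 0 < c) :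
    ℙ {ω | min (θ * V ω) Pbar * X ω ≥ c} =
      ENNReal.ofReal
        (Pbar ^ L / (Real.Gamma L * (θ * s) ^ L) *
          incompleteBessel L (c / (Pbar * lam)) (Pbar / (θ * s)) +
        Real.exp (-(c / (Pbar * lam))) * upperIncGamma L (Pbar / (θ * s)) /
          Real.Gamma L) := by
  have hr : (0:ℝ) < lam⁻¹ := inv_pos.mpr hlam
  have hρ : (0:ℝ) < s⁻¹ := inv_pos.mpr hs
  have hLpos : (0:ℝ) < (L : ℝ) := Nat.cast_pos.mpr hL
  have hΓ : 0 < Real.Gamma L := Real.Gamma_pos_of_pos hLpos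
  set v0 : ℝ := Pbar / θ with hv0def
  have hv0 : 0 < v0 := div_pos hPbar hθ
  have hθv0 : θ * v0 = Pbar := by rw [hv0def]; field_simp
  -- step 1: rewrite as product measure
  have hmap : Measure.map (fun ω => (V ω, X ω)) ℙ
      = (gammaMeasure L s⁻¹).prod (expMeasure lam⁻¹) := by
    rw [← hV, ← hX]
    exact (indepFun_iff_map_prod_eq_prod_map_map hVm.aemeasurable hXm.aemeasurable).mp hind.symm
  have mS : MeasurableSet {p : ℝ × ℝ | min (θ * p.1) Pbar * p.2 ≥ c} :=
    measurableSet_le measurable_const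
      (((measurable_fst.const_mul θ).min measurable_const).mul measurable_snd)
  have hset : {ω | min (θ * V ω) Pbar * X ω ≥ c}
      = (fun ω => (V ω, X ω)) ⁻¹' {p : ℝ × ℝ | min (θ * p.1) Pbar * p.2 ≥ c} := rfl
  have hPexp : IsProbabilityMeasure (expMeasure lam⁻¹) := isProbabilityMeasure_expMeasure hr
  rw [hset, ← Measure.map_apply (hVm.prodMk hXm) mS, hmap, Measure.prod_apply mS]
  -- step 2: the slices
  have hslice : ∀ v : ℝ,
      expMeasure lam⁻¹ (Prod.mk v ⁻¹' {p : ℝ × ℝ | min (θ * p.1) Pbar * p.2 ≥ c})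
      = Set.indicator (Set.Ioi 0)
          (fun v => ENNReal.ofReal (Real.exp (-(lam⁻¹ * (c / min (θ * v) Pbar))))) v := by
    intro v
    by_cases hv : v ∈ Set.Ioi (0:ℝ)
    · rw [Set.indicator_of_mem hv]
      have hvpos : (0:ℝ) < v := hv
      have hm : 0 < min (θ * v) Pbar := lt_min (by positivity) hPbar
      have hEq : (Prod.mk v ⁻¹' {p : ℝ × ℝ | min (θ * p.1) Pbar * p.2 ≥ c})
          = Set.Ici (c / min (θ * v) Pbar) := by
        ext x
        simp only [Set.mem_preimage, Set.mem_setOf_eq, Set.mem_Ici, ge_iff_le]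
        rw [div_le_iff₀ hm, mul_comm]
      rw [hEq, expMeasure_Ici hr (by positivity)]
    · rw [Set.indicator_of_notMem hv]
      simp only [Set.mem_Ioi, not_lt] at hv
      refine measure_mono_null ?_ expMeasure_Iio_zero
      intro x hx
      simp only [Set.mem_preimage, Set.mem_setOf_eq, ge_iff_le] at hx
      simp only [Set.mem_Iio]
      by_contra hx0
      push_neg at hx0
      have hm : min (θ * v) Pbar ≤ 0 :=
        le_trans (min_le_left _ _) (mul_nonpos_of_nonneg_of_nonpos hθ.le hv)
      nlinarith
  rw [lintegral_congr hslice]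
  -- step 3: integrate against the gamma density
  have hgmeas : Measurable (gammaPDF L s⁻¹) :=
    (measurable_gammaPDFReal _ _).ennreal_ofReal
  have hmmeas : Measurable fun v => min (θ * v) Pbar :=
    (measurable_id.const_mul θ).min measurable_const
  have hGmeas : Measurable fun v : ℝ =>
      ENNReal.ofReal (Real.exp (-(lam⁻¹ * (c / min (θ * v) Pbar)))) :=
    (((measurable_const.div hmmeas).const_mul lam⁻¹).neg.exp).ennreal_ofReal
  rw [gammaMeasure, lintegral_withDensity_eq_lintegral_mul _ hgmeas
    (hGmeas.indicator measurableSet_Ioi)]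
  have hind2 : ∀ v, (gammaPDF L s⁻¹ * Set.indicator (Set.Ioi 0)
        (fun v => ENNReal.ofReal (Real.exp (-(lam⁻¹ * (c / min (θ * v) Pbar)))))) v
      = Set.indicator (Set.Ioi 0) (fun v => ENNReal.ofReal
          (gammaPDFReal L s⁻¹ v * Real.exp (-(lam⁻¹ * (c / min (θ * v) Pbar))))) v := by
    intro v
    by_cases hv : v ∈ Set.Ioi (0:ℝ)
    · rw [Pi.mul_apply, Set.indicator_of_mem hv, Set.indicator_of_mem hv, gammaPDF,
        ← ENNReal.ofReal_mul (gammaPDFReal_nonneg hLpos hρ v)]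
    · rw [Pi.mul_apply, Set.indicator_of_notMem hv, Set.indicator_of_notMem hv, mul_zero]
  rw [lintegral_congr hind2, lintegral_indicator measurableSet_Ioi _]
  -- step 4: convert to a real integral
  set f : ℝ → ℝ := fun v =>
    gammaPDFReal L s⁻¹ v * Real.exp (-(lam⁻¹ * (c / min (θ * v) Pbar))) with hfdef
  have hfmeas : Measurable f :=
    (measurable_gammaPDFReal _ _).mul
      ((measurable_const.div hmmeas).const_mul lam⁻¹).neg.exp
  have hfnonneg : ∀ v, 0 ≤ f v := fun v =>
    mul_nonneg (gammaPDFReal_nonneg hLpos hρ v) (Real.exp_nonneg _)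
  have hgint : IntegrableOn (gammaPDFReal L s⁻¹) (Set.Ioi 0) := by
    refine ⟨(measurable_gammaPDFReal _ _).aestronglyMeasurable.restrict, ?_⟩
    rw [hasFiniteIntegral_iff_ofReal (ae_of_all _ (gammaPDFReal_nonneg hLpos hρ))]
    calc ∫⁻ v in Set.Ioi 0, ENNReal.ofReal (gammaPDFReal L s⁻¹ v)
        ≤ ∫⁻ v, gammaPDF L s⁻¹ v := setLIntegral_le_lintegral _ _
      _ = 1 := lintegral_gammaPDF_eq_one hLpos hρ
      _ < ⊤ := ENNReal.one_lt_top
  have hfint : IntegrableOn f (Set.Ioi 0) := by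
    refine Integrable.mono' hgint hfmeas.aestronglyMeasurable.restrict ?_
    rw [ae_restrict_iff' measurableSet_Ioi]
    refine ae_of_all _ fun v hv => ?_
    have hvpos : (0:ℝ) < v := hv
    have hm : 0 < min (θ * v) Pbar := lt_min (by positivity) hPbar
    rw [Real.norm_eq_abs, abs_of_nonneg (hfnonneg v)]
    calc f v ≤ gammaPDFReal L s⁻¹ v * 1 := by
          refine mul_le_mul_of_nonneg_left ?_ (gammaPDFReal_nonneg hLpos hρ v)
          refine Real.exp_le_one_iff.mpr ?_
          have : 0 ≤ lam⁻¹ * (c / min (θ * v) Pbar) := by positivity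
          linarith
      _ = gammaPDFReal L s⁻¹ v := mul_one _
  rw [← ofReal_integral_eq_lintegral_ofReal hfint (ae_of_all _ hfnonneg)]
  congr 1
  -- step 5: split the real integral at v0
  have hsplit : ∫ v in Set.Ioi 0, f v
      = (∫ v in Set.Ioc 0 v0, f v) + ∫ v in Set.Ioi v0, f v := by
    rw [← setIntegral_union (Set.Ioc_disjoint_Ioi le_rfl) measurableSet_Ioi
      (hfint.mono_set Set.Ioc_subset_Ioi_self) (hfint.mono_set (Set.Ioi_subset_Ioi hv0.le)),
      Set.Ioc_union_Ioi_eq_Ioi hv0.le]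
  rw [hsplit]
  -- step 6: the tail piece
  have htail : ∫ v in Set.Ioi v0, f v
      = Real.exp (-(c / (Pbar * lam))) * upperIncGamma L (Pbar / (θ * s)) / Real.Gamma L := by
    have hcong : ∀ v ∈ Set.Ioi v0, f v
        = gammaPDFReal L s⁻¹ v * Real.exp (-(c / (Pbar * lam))) := by
      intro v hv
      have hv' : v0 < v := hv
      have hmin : min (θ * v) Pbar = Pbar := min_eq_right (by nlinarith)
      rw [hfdef]
      simp only
      rw [hmin, show lam⁻¹ * (c / Pbar) = c / (Pbar * lam) by
        field_simp]
    rw [setIntegral_congr_fun measurableSet_Ioi hcong, MeasureTheory.integral_mul_const,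
      gamma_tail hρ hv0 L hL, show s⁻¹ * v0 = Pbar / (θ * s) by rw [hv0def]; field_simp]
    rw [upperIncGamma]
    ring
  rw [htail]
  -- step 7: the Bessel piece
  have hbessel : ∫ v in Set.Ioc 0 v0, f v
      = Pbar ^ L / (Real.Gamma L * (θ * s) ^ L) *
          incompleteBessel L (c / (Pbar * lam)) (Pbar / (θ * s)) := by
    rw [integral_Ioc_eq_integral_Ioo, integral_Ioo_inv_sub hv0 f]
    have hcong : ∀ t ∈ Set.Ioi (1:ℝ), v0 / t ^ 2 * f (v0 / t)
        = (s⁻¹ ^ (L:ℝ) * v0 ^ (L:ℝ) / Real.Gamma L) *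
            (t ^ (-(L:ℝ) - 1) *
              Real.exp (-(c / (Pbar * lam) * t) - (Pbar / (θ * s)) / t)) := by
      intro t ht
      have ht1 : (1:ℝ) < t := ht
      have ht0 : (0:ℝ) < t := by linarith
      have hw : 0 < v0 / t := by positivity
      have hmin : min (θ * (v0 / t)) Pbar = θ * (v0 / t) := by
        refine min_eq_left ?_
        rw [← hθv0]
        have : v0 / t < v0 := by
          rw [div_lt_iff₀ ht0]; nlinarith
        nlinarith
      have hexp : Real.exp (-(s⁻¹ * (v0 / t))) *
            Real.exp (-(lam⁻¹ * (c / (θ * (v0 / t)))))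
          = Real.exp (-(c / (Pbar * lam) * t) - (Pbar / (θ * s)) / t) := by
        rw [← Real.exp_add]
        congr 1
        rw [hv0def]
        field_simp
        ring
      have hpow : v0 / t ^ 2 * (v0 / t) ^ ((L:ℝ) - 1) = v0 ^ (L:ℝ) * t ^ (-(L:ℝ) - 1) := by
        have h2 : (t:ℝ) ^ 2 = t ^ (2:ℝ) := by
          rw [← Real.rpow_natCast t 2]; norm_num
        rw [Real.div_rpow hv0.le ht0.le, h2, div_mul_div_comm, ← Real.rpow_add ht0,
          mul_comm v0 (v0 ^ ((L:ℝ) - 1)), ← Real.rpow_add_one hv0.ne', sub_add_cancel,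
          show (2:ℝ) + ((L:ℝ) - 1) = (L:ℝ) + 1 by ring, div_eq_mul_inv,
          ← Real.rpow_neg ht0.le, show -((L:ℝ) + 1) = -(L:ℝ) - 1 by ring]
      rw [hfdef]
      simp only
      rw [hmin, gammaPDFReal, if_pos hw.le]
      calc v0 / t ^ 2 * (s⁻¹ ^ (L:ℝ) / Real.Gamma L * (v0 / t) ^ ((L:ℝ) - 1) *
              Real.exp (-(s⁻¹ * (v0 / t))) * Real.exp (-(lam⁻¹ * (c / (θ * (v0 / t))))))
          = (s⁻¹ ^ (L:ℝ) / Real.Gamma L) * (v0 / t ^ 2 * (v0 / t) ^ ((L:ℝ) - 1)) *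
              (Real.exp (-(s⁻¹ * (v0 / t))) * Real.exp (-(lam⁻¹ * (c / (θ * (v0 / t)))))) := by
            ring
        _ = (s⁻¹ ^ (L:ℝ) * v0 ^ (L:ℝ) / Real.Gamma L) *
              (t ^ (-(L:ℝ) - 1) *
                Real.exp (-(c / (Pbar * lam) * t) - (Pbar / (θ * s)) / t)) := by
            rw [hpow, hexp]; ring
    rw [setIntegral_congr_fun measurableSet_Ioi hcong, MeasureTheory.integral_const_mul]
    have hK : s⁻¹ ^ (L:ℝ) * v0 ^ (L:ℝ) / Real.Gamma L
        = Pbar ^ L / (Real.Gamma L * (θ * s) ^ L) := by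
      rw [← Real.mul_rpow hρ.le hv0.le,
        show s⁻¹ * v0 = Pbar / (θ * s) by rw [hv0def]; field_simp,
        Real.rpow_natCast, div_pow]
      field_simp
    rw [hK, incompleteBessel]
  rw [hbessel]
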